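/- Let m ≥ 1 and n = 2m. Suppose nonnegative reals a_0,…,a_{m−1}, b_0,…,b_{m−1}, c_0,…,c_{m−1} satisfy a_{u−v} + a_{min(u+v, 2m−1−u−v)} + b_u + c_v ≥ 1 for all integers u, v with 0 ≤ v ≤ u ≤ m−1. Then every no-three-in-line set S ⊆ C_0(2m) satisfies |S| ≤ 8·Σ_{i=0}^{m−1} a_i + 4·Σ_{i=0}^{m−1} b_i + 2 c_0 + 4·Σ_{j=1}^{m−1} c_j, and the same bound holds for every no-three-in-line set S ⊆ C_1(2m). -/

import Mathlib

/-- The `n × n` integer grid `G_n = {0,…,n−1} × {0,…,n−1} ⊆ ℤ²`. -/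
noncomputable def grid (n : ℕ) : Finset (ℤ × ℤ) :=
  Finset.Icc (0 : ℤ) ((n : ℤ) - 1) ×ˢ Finset.Icc (0 : ℤ) ((n : ℤ) - 1)

/-- The parity (checkerboard) class `C_ε(n) = {(x,y) ∈ G_n : x + y ≡ ε (mod 2)}`. -/
noncomputable def gridClass (n : ℕ) (ε : ℕ) : Finset (ℤ × ℤ) :=
  (grid n).filter (fun P => (P.1 + P.2) % 2 = (ε : ℤ))

/-- Three points of `ℤ²` are collinear. -/
def Collinear3 (P Q R : ℤ × ℤ) : Prop :=
  (Q.1 - P.1) * (R.2 - P.2) = (R.1 - P.1) * (Q.2 - P.2)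

/-- A finite set is no-three-in-line if no three distinct points of it are collinear. -/
def NTIL (S : Finset (ℤ × ℤ)) : Prop :=
  ∀ P ∈ S, ∀ Q ∈ S, ∀ R ∈ S, P ≠ Q → P ≠ R → Q ≠ R → ¬ Collinear3 P Q R

/- ### Auxiliary definitions and lemmas -/

/-- folded column index -/
def fxIdx (m : ℕ) (P : ℤ × ℤ) : ℕ := (min P.1 (2*m-1-P.1)).toNat
/-- folded row index -/
def fyIdx (m : ℕ) (P : ℤ × ℤ) : ℕ := (min P.2 (2*m-1-P.2)).toNat
/-- folded diagonal index -/
def duIdx (m : ℕ) (P : ℤ × ℤ) : ℕ := ((2*m-1 : ℤ) - |P.1 - P.2|).toNat / 2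
/-- folded antidiagonal index -/
def dvIdx (m : ℕ) (P : ℤ × ℤ) : ℕ := (|P.1 + P.2 - (2*m-1 : ℤ)|).toNat / 2

lemma twoPerLine {S : Finset (ℤ × ℤ)} (hS : NTIL S) (α β γ : ℤ) (hαβ : α ≠ 0 ∨ β ≠ 0) :
    (S.filter (fun P => α * P.1 + β * P.2 = γ)).card ≤ 2 := by
  by_contra hcard
  push_neg at hcard
  obtain ⟨P, Q, R, hP, hQ, hR, hPQ, hPR, hQR⟩ := Finset.two_lt_card_iff.1 hcard
  rw [Finset.mem_filter] at hP hQ hR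
  refine hS P hP.1 Q hQ.1 R hR.1 hPQ hPR hQR ?_
  have hQ' : α * (Q.1 - P.1) + β * (Q.2 - P.2) = 0 := by
    have := hP.2; have := hQ.2; ring_nf; linarith
  have hR' : α * (R.1 - P.1) + β * (R.2 - P.2) = 0 := by
    have := hP.2; have := hR.2; ring_nf; linarith
  unfold Collinear3
  rcases hαβ with hα | hβ
  · apply mul_left_cancel₀ hα
    linear_combination (R.2 - P.2) * hQ' - (Q.2 - P.2) * hR'
  · apply mul_left_cancel₀ hβ
    linear_combination (Q.1 - P.1) * hR' - (R.1 - P.1) * hQ'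

lemma memClass {m : ℕ} {S : Finset (ℤ × ℤ)} (hsub : S ⊆ gridClass (2*m) 1) {P : ℤ × ℤ}
    (hP : P ∈ S) : 0 ≤ P.1 ∧ P.1 ≤ 2*m-1 ∧ 0 ≤ P.2 ∧ P.2 ≤ 2*m-1 ∧ (P.1 + P.2) % 2 = 1 := by
  have := hsub hP
  simp only [gridClass, grid, Finset.mem_filter, Finset.mem_product, Finset.mem_Icc,
    Nat.cast_one, Nat.cast_mul, Nat.cast_ofNat] at this
  refine ⟨this.1.1.1, ?_, this.1.2.1, ?_, ?_⟩
  · have := this.1.1.2; push_cast at this ⊢; linarith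
  · have := this.1.2.2; push_cast at this ⊢; linarith
  · exact this.2

set_option maxHeartbeats 2000000 in
/-- key pointwise index identity -/
lemma keyIdx (m : ℕ) (hm : 1 ≤ m) (P : ℤ × ℤ) (hx0 : 0 ≤ P.1) (hx1 : P.1 ≤ 2*m-1)
    (hy0 : 0 ≤ P.2) (hy1 : P.2 ≤ 2*m-1) (hpar : (P.1 + P.2) % 2 = 1) :
    dvIdx m P ≤ duIdx m P ∧ duIdx m P ≤ m - 1 ∧
    ((duIdx m P - dvIdx m P = fxIdx m P ∧
        min (duIdx m P + dvIdx m P) (2*m - 1 - duIdx m P - dvIdx m P) = fyIdx m P) ∨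
     (duIdx m P - dvIdx m P = fyIdx m P ∧
        min (duIdx m P + dvIdx m P) (2*m - 1 - duIdx m P - dvIdx m P) = fxIdx m P)) := by
  unfold duIdx dvIdx fxIdx fyIdx
  rcases abs_cases (P.1 - P.2) with ⟨h1, _⟩ | ⟨h1, _⟩ <;>
    rcases abs_cases (P.1 + P.2 - (2*m-1 : ℤ)) with ⟨h2, _⟩ | ⟨h2, _⟩ <;>
    rw [h1, h2] <;> omega

/-- generic fiberwise sum bound -/
lemma sumFiberLe (S : Finset (ℤ × ℤ)) (f K : ℕ → ℝ) (idx : ℤ × ℤ → ℕ) (m : ℕ)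
    (hidx : ∀ P ∈ S, idx P < m)
    (hK : ∀ i < m, ((S.filter (fun P => idx P = i)).card : ℝ) * f i ≤ K i) :
    ∑ P ∈ S, f (idx P) ≤ ∑ i ∈ Finset.range m, K i := by
  have h1 : ∑ P ∈ S, f (idx P)
      = ∑ i ∈ Finset.range m, ∑ P ∈ S.filter (fun P => idx P = i), f (idx P) :=
    (Finset.sum_fiberwise_of_maps_to (fun P hP => Finset.mem_range.2 (hidx P hP)) _).symm
  rw [h1]
  refine Finset.sum_le_sum fun i hi => ?_
  have h2 : ∑ P ∈ S.filter (fun P => idx P = i), f (idx P)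
      = ((S.filter (fun P => idx P = i)).card : ℝ) * f i := by
    rw [Finset.sum_congr rfl (fun P hP => by
      rw [(Finset.mem_filter.1 hP).2]), Finset.sum_const, nsmul_eq_mul]
  rw [h2]
  exact hK i (Finset.mem_range.1 hi)

lemma cardTwoFilters {S : Finset (ℤ × ℤ)} (p q r : ℤ × ℤ → Prop) [DecidablePred p]
    [DecidablePred q] [DecidablePred r] (h : ∀ P ∈ S, p P → q P ∨ r P)
    (hq : (S.filter q).card ≤ 2) (hr : (S.filter r).card ≤ 2) :
    (S.filter p).card ≤ 4 := by
  have hsub : S.filter p ⊆ S.filter q ∪ S.filter r := by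
    intro P hP
    rw [Finset.mem_filter] at hP
    rcases h P hP.1 hP.2 with h' | h'
    · exact Finset.mem_union_left _ (Finset.mem_filter.2 ⟨hP.1, h'⟩)
    · exact Finset.mem_union_right _ (Finset.mem_filter.2 ⟨hP.1, h'⟩)
  calc (S.filter p).card ≤ (S.filter q ∪ S.filter r).card := Finset.card_le_card hsub
    _ ≤ (S.filter q).card + (S.filter r).card := Finset.card_union_le _ _
    _ ≤ 4 := by omega

/-- Main bound for the odd parity class. -/
lemma bound_one (m : ℕ) (hm : 1 ≤ m) (a b c : ℕ → ℝ)
    (ha : ∀ i ≤ m - 1, 0 ≤ a i) (hb : ∀ i ≤ m - 1, 0 ≤ b i) (hc : ∀ i ≤ m - 1, 0 ≤ c i)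
    (hcon : ∀ u v : ℕ, v ≤ u → u ≤ m - 1 →
      1 ≤ a (u - v) + a (min (u + v) (2 * m - 1 - u - v)) + b u + c v)
    (S : Finset (ℤ × ℤ)) (hsub : S ⊆ gridClass (2 * m) 1) (hS : NTIL S) :
    (S.card : ℝ) ≤ 8 * (∑ i ∈ Finset.range m, a i) + 4 * (∑ i ∈ Finset.range m, b i)
        + 2 * c 0 + 4 * (∑ j ∈ Finset.Ico 1 m, c j) := by
  -- pointwise weight bound
  have hpt : ∀ P ∈ S, (1:ℝ) ≤ a (fxIdx m P) + a (fyIdx m P) + b (duIdx m P) + c (dvIdx m P) := by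
    intro P hP
    obtain ⟨hx0, hx1, hy0, hy1, hpar⟩ := memClass hsub hP
    obtain ⟨hvu, hum, hcase⟩ := keyIdx m hm P hx0 hx1 hy0 hy1 hpar
    have := hcon (duIdx m P) (dvIdx m P) hvu hum
    rcases hcase with ⟨e1, e2⟩ | ⟨e1, e2⟩ <;> rw [e1, e2] at this <;> linarith
  -- index ranges
  have hfx : ∀ P ∈ S, fxIdx m P < m := by
    intro P hP; obtain ⟨hx0, hx1, _, _, hpar⟩ := memClass hsub hP
    unfold fxIdx; omega
  have hfy : ∀ P ∈ S, fyIdx m P < m := by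
    intro P hP; obtain ⟨_, _, hy0, hy1, hpar⟩ := memClass hsub hP
    unfold fyIdx; omega
  have hdu : ∀ P ∈ S, duIdx m P < m := by
    intro P hP; obtain ⟨hx0, hx1, hy0, hy1, hpar⟩ := memClass hsub hP
    obtain ⟨_, hum, _⟩ := keyIdx m hm P hx0 hx1 hy0 hy1 hpar; omega
  have hdv : ∀ P ∈ S, dvIdx m P < m := by
    intro P hP; obtain ⟨hx0, hx1, hy0, hy1, hpar⟩ := memClass hsub hP
    obtain ⟨hvu, hum, _⟩ := keyIdx m hm P hx0 hx1 hy0 hy1 hpar; omega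
  -- fiber cardinality bounds
  have cfx : ∀ i, i < m → ((S.filter (fun P => fxIdx m P = i)).card ≤ 4) := by
    intro i hi
    refine cardTwoFilters _ (fun P => P.1 = (i:ℤ)) (fun P => P.1 = (2*m-1-i : ℤ)) ?_ ?_ ?_
    · intro P hP hidx
      obtain ⟨hx0, hx1, _, _, _⟩ := memClass hsub hP
      unfold fxIdx at hidx; omega
    · have := twoPerLine hS 1 0 (i:ℤ) (Or.inl one_ne_zero); simpa using this
    · have := twoPerLine hS 1 0 (2*m-1-i : ℤ) (Or.inl one_ne_zero); simpa using this
  have cfy : ∀ i, i < m → ((S.filter (fun P => fyIdx m P = i)).card ≤ 4) := by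
    intro i hi
    refine cardTwoFilters _ (fun P => P.2 = (i:ℤ)) (fun P => P.2 = (2*m-1-i : ℤ)) ?_ ?_ ?_
    · intro P hP hidx
      obtain ⟨_, _, hy0, hy1, _⟩ := memClass hsub hP
      unfold fyIdx at hidx; omega
    · have := twoPerLine hS 0 1 (i:ℤ) (Or.inr one_ne_zero); simpa using this
    · have := twoPerLine hS 0 1 (2*m-1-i : ℤ) (Or.inr one_ne_zero); simpa using this
  have cdu : ∀ i, i < m → ((S.filter (fun P => duIdx m P = i)).card ≤ 4) := by
    intro i hi
    refine cardTwoFilters _ (fun P => P.1 - P.2 = (2*m-1-2*i : ℤ))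
      (fun P => P.1 - P.2 = -(2*m-1-2*i : ℤ)) ?_ ?_ ?_
    · intro P hP hidx
      obtain ⟨hx0, hx1, hy0, hy1, hpar⟩ := memClass hsub hP
      unfold duIdx at hidx
      rcases abs_cases (P.1 - P.2) with ⟨h1, _⟩ | ⟨h1, _⟩ <;> rw [h1] at hidx <;> omega
    · have := twoPerLine hS 1 (-1) (2*m-1-2*i : ℤ) (Or.inl one_ne_zero)
      refine le_trans (le_of_eq ?_) this
      congr 1; apply Finset.filter_congr; intro P _; constructor <;> intro h <;> linarith
    · have := twoPerLine hS 1 (-1) (-(2*m-1-2*i) : ℤ) (Or.inl one_ne_zero)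
      refine le_trans (le_of_eq ?_) this
      congr 1; apply Finset.filter_congr; intro P _; constructor <;> intro h <;> linarith
  have cdv : ∀ i, i < m → ((S.filter (fun P => dvIdx m P = i)).card ≤ 4) := by
    intro i hi
    refine cardTwoFilters _ (fun P => P.1 + P.2 = (2*m-1+2*i : ℤ))
      (fun P => P.1 + P.2 = (2*m-1-2*i : ℤ)) ?_ ?_ ?_
    · intro P hP hidx
      obtain ⟨hx0, hx1, hy0, hy1, hpar⟩ := memClass hsub hP
      unfold dvIdx at hidx
      rcases abs_cases (P.1 + P.2 - (2*m-1 : ℤ)) with ⟨h1, _⟩ | ⟨h1, _⟩ <;>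
        rw [h1] at hidx <;> omega
    · have := twoPerLine hS 1 1 (2*m-1+2*i : ℤ) (Or.inl one_ne_zero)
      refine le_trans (le_of_eq ?_) this
      congr 1; apply Finset.filter_congr; intro P _; constructor <;> intro h <;> linarith
    · have := twoPerLine hS 1 1 (2*m-1-2*i : ℤ) (Or.inl one_ne_zero)
      refine le_trans (le_of_eq ?_) this
      congr 1; apply Finset.filter_congr; intro P _; constructor <;> intro h <;> linarith
  have cdv0 : (S.filter (fun P => dvIdx m P = 0)).card ≤ 2 := by
    have h2 := twoPerLine hS 1 1 (2*m-1 : ℤ) (Or.inl one_ne_zero)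
    refine le_trans (Finset.card_le_card ?_) (le_trans (le_of_eq rfl) h2)
    intro P hP
    rw [Finset.mem_filter] at hP ⊢
    refine ⟨hP.1, ?_⟩
    obtain ⟨hx0, hx1, hy0, hy1, hpar⟩ := memClass hsub hP.1
    have hidx := hP.2
    unfold dvIdx at hidx
    rcases abs_cases (P.1 + P.2 - (2*m-1 : ℤ)) with ⟨h1, _⟩ | ⟨h1, _⟩ <;>
      rw [h1] at hidx <;> push_cast <;> omega
  -- nonnegativity on range
  have ha' : ∀ i, i < m → 0 ≤ a i := fun i hi => ha i (by omega)
  have hb' : ∀ i, i < m → 0 ≤ b i := fun i hi => hb i (by omega)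
  have hc' : ∀ i, i < m → 0 ≤ c i := fun i hi => hc i (by omega)
  -- four sum bounds
  have hA : ∑ P ∈ S, a (fxIdx m P) ≤ ∑ i ∈ Finset.range m, 4 * a i := by
    refine sumFiberLe S a _ _ m hfx fun i hi => ?_
    have := cfx i hi
    have h4 : ((S.filter (fun P => fxIdx m P = i)).card : ℝ) ≤ 4 := by exact_mod_cast this
    nlinarith [ha' i hi]
  have hB : ∑ P ∈ S, a (fyIdx m P) ≤ ∑ i ∈ Finset.range m, 4 * a i := by
    refine sumFiberLe S a _ _ m hfy fun i hi => ?_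
    have := cfy i hi
    have h4 : ((S.filter (fun P => fyIdx m P = i)).card : ℝ) ≤ 4 := by exact_mod_cast this
    nlinarith [ha' i hi]
  have hC : ∑ P ∈ S, b (duIdx m P) ≤ ∑ i ∈ Finset.range m, 4 * b i := by
    refine sumFiberLe S b _ _ m hdu fun i hi => ?_
    have := cdu i hi
    have h4 : ((S.filter (fun P => duIdx m P = i)).card : ℝ) ≤ 4 := by exact_mod_cast this
    nlinarith [hb' i hi]
  have hD : ∑ P ∈ S, c (dvIdx m P)
      ≤ ∑ i ∈ Finset.range m, (if i = 0 then 2 * c 0 else 4 * c i) := by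
    refine sumFiberLe S c _ _ m hdv fun i hi => ?_
    by_cases h0 : i = 0
    · subst h0; rw [if_pos rfl]
      have h2 : ((S.filter (fun P => dvIdx m P = 0)).card : ℝ) ≤ 2 := by exact_mod_cast cdv0
      nlinarith [hc' 0 hm]
    · simp only [if_neg h0]
      have := cdv i hi
      have h4 : ((S.filter (fun P => dvIdx m P = i)).card : ℝ) ≤ 4 := by exact_mod_cast this
      nlinarith [hc' i hi]
  -- evaluate the D sum
  have hDsum : ∑ i ∈ Finset.range m, (if i = 0 then 2 * c 0 else 4 * c i)
      = 2 * c 0 + 4 * ∑ j ∈ Finset.Ico 1 m, c j := by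
    rw [Finset.range_eq_Ico, ← Finset.sum_Ico_consecutive _ (Nat.zero_le 1) hm]
    have h0 : ∑ i ∈ Finset.Ico 0 1, (if i = 0 then 2 * c 0 else 4 * c i) = 2 * c 0 := by
      simp
    have h1 : ∑ i ∈ Finset.Ico 1 m, (if i = 0 then 2 * c 0 else 4 * c i)
        = 4 * ∑ j ∈ Finset.Ico 1 m, c j := by
      rw [Finset.mul_sum]
      refine Finset.sum_congr rfl fun i hi => ?_
      have : i ≠ 0 := by have := (Finset.mem_Ico.1 hi).1; omega
      simp [this]
    rw [h0, h1]
  -- assemble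
  have hcard : (S.card : ℝ) = ∑ _P ∈ S, (1:ℝ) := by simp
  have hmain : (S.card : ℝ)
      ≤ ∑ P ∈ S, (a (fxIdx m P) + a (fyIdx m P) + b (duIdx m P) + c (dvIdx m P)) := by
    rw [hcard]; exact Finset.sum_le_sum hpt
  have hsplit : ∑ P ∈ S, (a (fxIdx m P) + a (fyIdx m P) + b (duIdx m P) + c (dvIdx m P))
      = (∑ P ∈ S, a (fxIdx m P)) + (∑ P ∈ S, a (fyIdx m P)) + (∑ P ∈ S, b (duIdx m P))
        + (∑ P ∈ S, c (dvIdx m P)) := by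
    rw [← Finset.sum_add_distrib, ← Finset.sum_add_distrib, ← Finset.sum_add_distrib]
  have h8 : ∑ i ∈ Finset.range m, 4 * a i = 4 * ∑ i ∈ Finset.range m, a i :=
    (Finset.mul_sum _ _ _).symm
  have h4b : ∑ i ∈ Finset.range m, 4 * b i = 4 * ∑ i ∈ Finset.range m, b i :=
    (Finset.mul_sum _ _ _).symm
  rw [hDsum] at hD
  rw [hsplit] at hmain
  rw [h8] at hA hB
  rw [h4b] at hC
  linarith

/-- horizontal reflection of the grid -/
def reflMap (m : ℕ) (P : ℤ × ℤ) : ℤ × ℤ := (2*m-1-P.1, P.2)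

theorem even_reduced_dual_bound (m : ℕ) (hm : 1 ≤ m) (a b c : ℕ → ℝ)
    (ha : ∀ i ≤ m - 1, 0 ≤ a i) (hb : ∀ i ≤ m - 1, 0 ≤ b i) (hc : ∀ i ≤ m - 1, 0 ≤ c i)
    (hcon : ∀ u v : ℕ, v ≤ u → u ≤ m - 1 →
      1 ≤ a (u - v) + a (min (u + v) (2 * m - 1 - u - v)) + b u + c v) :
    ∀ ε : ℕ, ε ≤ 1 → ∀ S : Finset (ℤ × ℤ), S ⊆ gridClass (2 * m) ε → NTIL S →
      (S.card : ℝ) ≤ 8 * (∑ i ∈ Finset.range m, a i) + 4 * (∑ i ∈ Finset.range m, b i)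
        + 2 * c 0 + 4 * (∑ j ∈ Finset.Ico 1 m, c j) := by
  intro ε hε S hsub hS
  interval_cases ε
  · -- reflect to the odd class
    have hinj : Function.Injective (reflMap m) := by
      intro P Q h
      simp only [reflMap, Prod.mk.injEq] at h
      exact Prod.ext (by linarith [h.1]) h.2
    have hcardeq : (S.image (reflMap m)).card = S.card := Finset.card_image_of_injective _ hinj
    have hsub' : S.image (reflMap m) ⊆ gridClass (2*m) 1 := by
      intro Q hQ
      obtain ⟨P, hP, rfl⟩ := Finset.mem_image.1 hQ
      have := hsub hP
      simp only [gridClass, grid, reflMap, Finset.mem_filter, Finset.mem_product,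
        Finset.mem_Icc] at this ⊢
      push_cast at this ⊢
      obtain ⟨⟨⟨h1, h2⟩, h3, h4⟩, h5⟩ := this
      refine ⟨⟨⟨by linarith, by linarith⟩, h3, h4⟩, ?_⟩
      omega
    have hS' : NTIL (S.image (reflMap m)) := by
      intro P' hP' Q' hQ' R' hR' hPQ hPR hQR
      obtain ⟨P, hP, rfl⟩ := Finset.mem_image.1 hP'
      obtain ⟨Q, hQ, rfl⟩ := Finset.mem_image.1 hQ'
      obtain ⟨R, hR, rfl⟩ := Finset.mem_image.1 hR'
      intro hcol
      refine hS P hP Q hQ R hR (fun h => hPQ (by rw [h])) (fun h => hPR (by rw [h]))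
        (fun h => hQR (by rw [h])) ?_
      unfold Collinear3 at hcol ⊢
      simp only [reflMap] at hcol
      linear_combination -hcol
    have := bound_one m hm a b c ha hb hc hcon (S.image (reflMap m)) hsub' hS'
    rw [hcardeq] at this
    exact this
  · exact bound_one m hm a b c ha hb hc hcon S hsub hS
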